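/- There is a θ* > 0 such that for all θ with 0 < θ < θ* the following holds: for any probability space and any random variables X and Y on it taking values in [−1,1], E[|f(X) − f(Y)|] ≤ 3θ²·√(E[(X − Y)²]), where f(x) = (1−θ²x)/√(1−θ²x²). -/

import Mathlib

open MeasureTheory

lemma lip_aux (θ : ℝ) (hθ0 : 0 < θ) (hθ : θ < 1/10) :
    ∀ x ∈ Set.Icc (-1:ℝ) 1, ∀ y ∈ Set.Icc (-1:ℝ) 1,
    |(1 - θ^2 * x) / Real.sqrt (1 - θ^2 * x^2)
      - (1 - θ^2 * y) / Real.sqrt (1 - θ^2 * y^2)| ≤ 3*θ^2 * |x - y| := by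
  have hθ2 : θ^2 ≤ 1/100 := by nlinarith
  set f : ℝ → ℝ := fun x => (1 - θ^2 * x) / Real.sqrt (1 - θ^2 * x^2) with hf
  set f' : ℝ → ℝ := fun x =>
    θ^2 * (x - 1) / (Real.sqrt (1 - θ^2 * x^2) * (1 - θ^2 * x^2)) with hf'
  have key : ∀ x ∈ Set.Icc (-1:ℝ) 1, (1 - θ^2 * x^2) ≥ 99/100 := by
    intro x hx
    obtain ⟨h1, h2⟩ := hx
    nlinarith [sq_nonneg x, sq_nonneg θ]
  have hsqrt : ∀ x ∈ Set.Icc (-1:ℝ) 1, Real.sqrt (1 - θ^2 * x^2) ≥ 9/10 := by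
    intro x hx
    have := key x hx
    have h2 : Real.sqrt (81/100) ≤ Real.sqrt (1 - θ^2 * x^2) := by
      apply Real.sqrt_le_sqrt; linarith
    have h81 : Real.sqrt (81/100) = 9/10 := by
      rw [show (81:ℝ)/100 = (9/10)^2 by norm_num, Real.sqrt_sq]; norm_num
    linarith
  have hderiv : ∀ x ∈ Set.Icc (-1:ℝ) 1, HasDerivAt f (f' x) x := by
    intro x hx
    have hu : (1 - θ^2 * x^2) > 0 := lt_of_lt_of_le (by norm_num) (key x hx)
    have hs : Real.sqrt (1 - θ^2 * x^2) > 0 := Real.sqrt_pos.mpr hu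
    have hun : HasDerivAt (fun y : ℝ => 1 - θ^2 * y^2) (-(θ^2 * (2*x))) x := by
      have : HasDerivAt (fun y : ℝ => 1 - θ^2 * y^2) (0 - θ^2 * (2*x^(2-1)*1)) x :=
        (hasDerivAt_const x 1).sub (((hasDerivAt_id x).pow 2).const_mul (θ^2))
      simpa using this
    have hsq : HasDerivAt (fun y : ℝ => Real.sqrt (1 - θ^2 * y^2))
        (-(θ^2 * (2*x)) / (2 * Real.sqrt (1 - θ^2 * x^2))) x := hun.sqrt (ne_of_gt hu)
    have hnum : HasDerivAt (fun y : ℝ => 1 - θ^2 * y) (-θ^2) x := by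
      have : HasDerivAt (fun y : ℝ => 1 - θ^2 * y) (0 - θ^2 * 1) x :=
        (hasDerivAt_const x 1).sub ((hasDerivAt_id x).const_mul (θ^2))
      simpa using this
    have hdiv := hnum.div hsq (ne_of_gt hs)
    convert hdiv using 1
    · rfl
    · rfl
    · rfl
    have hss : Real.sqrt (1 - θ^2 * x^2) ^ 2 = 1 - θ^2 * x^2 := Real.sq_sqrt hu.le
    rw [hf']
    field_simp
    linear_combination (x - θ^2 * x^2) * hss
  have hbound : ∀ x ∈ Set.Icc (-1:ℝ) 1, ‖f' x‖ ≤ 3*θ^2 := by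
    intro x hx
    obtain ⟨h1, h2⟩ := hx
    have hu := key x ⟨h1, h2⟩
    have hs := hsqrt x ⟨h1, h2⟩
    rw [hf', Real.norm_eq_abs, abs_div]
    rw [div_le_iff₀ (by rw [abs_of_nonneg (by positivity)]; positivity)]
    have h3 : |θ^2 * (x - 1)| ≤ θ^2 * 2 := by
      rw [abs_mul, abs_of_nonneg (sq_nonneg θ)]
      have : |x - 1| ≤ 2 := by rw [abs_le]; constructor <;> linarith
      nlinarith [sq_nonneg θ]
    have h4 : |Real.sqrt (1 - θ^2 * x^2) * (1 - θ^2 * x^2)| ≥ (9/10) * (99/100) := by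
      rw [abs_of_nonneg (by positivity)]
      gcongr
    nlinarith [sq_nonneg θ]
  intro x hx y hy
  have := (convex_Icc (-1:ℝ) 1).norm_image_sub_le_of_norm_hasDerivWithin_le
    (fun z hz => (hderiv z hz).hasDerivWithinAt) hbound hy hx
  simpa [Real.norm_eq_abs] using this

theorem expectation_f_diff_bound :
    ∃ θstar : ℝ, 0 < θstar ∧ ∀ θ : ℝ, 0 < θ → θ < θstar →
    ∀ (Ω : Type) (_ : MeasurableSpace Ω) (μ : Measure Ω), IsProbabilityMeasure μ →
    ∀ X Y : Ω → ℝ, Measurable X → Measurable Y →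
    (∀ ω, X ω ∈ Set.Icc (-1 : ℝ) 1) → (∀ ω, Y ω ∈ Set.Icc (-1 : ℝ) 1) →
    ∫ ω, |(1 - θ^2 * X ω) / Real.sqrt (1 - θ^2 * (X ω)^2)
          - (1 - θ^2 * Y ω) / Real.sqrt (1 - θ^2 * (Y ω)^2)| ∂μ
      ≤ 3 * θ^2 * Real.sqrt (∫ ω, (X ω - Y ω)^2 ∂μ) := by
  refine ⟨1/10, by norm_num, ?_⟩
  intro θ hθ0 hθ Ω mΩ μ hμ X Y hX hY hXb hYb
  set g : Ω → ℝ := fun ω => X ω - Y ω with hg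
  have hgmeas : Measurable g := hX.sub hY
  have hgbd : ∀ ω, |g ω| ≤ 2 := by
    intro ω
    obtain ⟨a1, a2⟩ := hXb ω; obtain ⟨b1, b2⟩ := hYb ω
    rw [abs_le]; constructor <;> simp [hg] <;> linarith
  have hgint : Integrable g μ := by
    apply Integrable.mono' (integrable_const 2) hgmeas.aestronglyMeasurable
    filter_upwards with ω using by simpa using hgbd ω
  have hgabsint : Integrable (fun ω => |g ω|) μ := hgint.abs
  have hg2int : Integrable (fun ω => (g ω)^2) μ := by
    apply Integrable.mono' (integrable_const 4) (hgmeas.pow_const 2).aestronglyMeasurable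
    filter_upwards with ω
    rw [Real.norm_eq_abs, abs_of_nonneg (sq_nonneg _)]
    nlinarith [hgbd ω, abs_nonneg (g ω), sq_abs (g ω)]
  have hlip := lip_aux θ hθ0 hθ
  have hpt : ∀ ω, |(1 - θ^2 * X ω) / Real.sqrt (1 - θ^2 * (X ω)^2)
          - (1 - θ^2 * Y ω) / Real.sqrt (1 - θ^2 * (Y ω)^2)| ≤ 3*θ^2 * |g ω| :=
    fun ω => hlip (X ω) (hXb ω) (Y ω) (hYb ω)
  have hFmeas : Measurable (fun ω => |(1 - θ^2 * X ω) / Real.sqrt (1 - θ^2 * (X ω)^2)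
          - (1 - θ^2 * Y ω) / Real.sqrt (1 - θ^2 * (Y ω)^2)|) := by
    apply Measurable.abs
    apply Measurable.sub
    · exact ((measurable_const.sub (hX.const_mul _)).div
        ((measurable_const.sub ((hX.pow_const 2).const_mul _)).sqrt))
    · exact ((measurable_const.sub (hY.const_mul _)).div
        ((measurable_const.sub ((hY.pow_const 2).const_mul _)).sqrt))
  have hFint : Integrable (fun ω => |(1 - θ^2 * X ω) / Real.sqrt (1 - θ^2 * (X ω)^2)
          - (1 - θ^2 * Y ω) / Real.sqrt (1 - θ^2 * (Y ω)^2)|) μ := by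
    apply Integrable.mono' (integrable_const (3*θ^2*2)) hFmeas.aestronglyMeasurable
    filter_upwards with ω
    rw [Real.norm_eq_abs, abs_abs]
    calc _ ≤ 3*θ^2 * |g ω| := hpt ω
    _ ≤ 3*θ^2*2 := by have := hgbd ω; nlinarith
  have step2 : ∫ ω, |(1 - θ^2 * X ω) / Real.sqrt (1 - θ^2 * (X ω)^2)
          - (1 - θ^2 * Y ω) / Real.sqrt (1 - θ^2 * (Y ω)^2)| ∂μ
      ≤ 3*θ^2 * ∫ ω, |g ω| ∂μ := by
    rw [← integral_const_mul]
    exact integral_mono hFint (hgabsint.const_mul _) hpt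
  have step3 : ∫ ω, |g ω| ∂μ ≤ Real.sqrt (∫ ω, (g ω)^2 ∂μ) := by
    set m := ∫ ω, |g ω| ∂μ with hm
    have hm0 : 0 ≤ m := integral_nonneg (fun ω => abs_nonneg _)
    have i1 : Integrable (fun ω => (g ω)^2 - 2*m*|g ω|) μ :=
      hg2int.sub (hgabsint.const_mul _)
    have hexp : ∫ ω, ((g ω)^2 - 2*m*|g ω| + m^2) ∂μ = (∫ ω, (g ω)^2 ∂μ) - m^2 := by
      rw [integral_add i1 (integrable_const _),
        integral_sub hg2int (hgabsint.const_mul (2*m)), integral_const_mul, integral_const]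
      simp [← hm]
      ring
    have hpos : 0 ≤ ∫ ω, ((g ω)^2 - 2*m*|g ω| + m^2) ∂μ := by
      apply integral_nonneg
      intro ω
      simp only [Pi.zero_apply]
      nlinarith [sq_abs (g ω), sq_nonneg (|g ω| - m)]
    have h2 : m^2 ≤ ∫ ω, (g ω)^2 ∂μ := by linarith [hexp ▸ hpos]
    have := Real.sqrt_le_sqrt h2
    rwa [Real.sqrt_sq hm0] at this
  calc _ ≤ 3*θ^2 * ∫ ω, |g ω| ∂μ := step2
  _ ≤ 3*θ^2 * Real.sqrt (∫ ω, (g ω)^2 ∂μ) := by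
      apply mul_le_mul_of_nonneg_left step3 (by positivity)
  _ = 3 * θ^2 * Real.sqrt (∫ ω, (X ω - Y ω)^2 ∂μ) := rfl
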